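/- Let n be a positive even integer and let z ∈ I^FPF_n be Sp-dominant, i.e. D^Sp(z) = {(i+j, j) : j ∈ [k], 1 ≤ i ≤ μ_j} for some strict partition μ_1 > μ_2 > ⋯ > μ_k > 0. Then 𝔊^Sp_z = ∏_{(i,j) ∈ D^Sp(z)} (x_i + x_j + β x_i x_j). -/

import Mathlib

open MvPolynomial

noncomputable section

/-- The coefficient ring `ℤ[β]`. -/
abbrev Rb : Type := Polynomial ℤ

/-- The indeterminate `β`. -/
def bb : Rb := Polynomial.X

/-- The order-reversing permutation `n⋯321`, i.e. `i ↦ n+1-i` in 1-indexed notation. -/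
def revPerm (n : ℕ) : Equiv.Perm (Fin n) :=
  ⟨Fin.rev, Fin.rev, fun i => Fin.rev_rev i, fun i => Fin.rev_rev i⟩

/-- `z` is a fixed-point-free involution. -/
def IsFPF {n : ℕ} (z : Equiv.Perm (Fin n)) : Prop :=
  z * z = 1 ∧ ∀ i, z i ≠ i

/-- `x_i + x_j + β x_i x_j`. -/
def oplus {n : ℕ} (i j : Fin n) : MvPolynomial (Fin n) Rb :=
  X i + X j + C bb * (X i * X j)

/-- `IsDivDiffB i j f g` encodes `∂_i^{(β)} f = g` where `j = i+1`:
`∂_i^{(β)} f = ((1+βx_j) f - s_i((1+βx_j) f)) / (x_i - x_j)`, stated multiplicatively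
(the quotient is exact, and `g` is uniquely determined since the ring is a domain). -/
def IsDivDiffB {n : ℕ} (i j : Fin n) (f g : MvPolynomial (Fin n) Rb) : Prop :=
  (X i - X j) * g =
    (1 + C bb * X j) * f - rename ⇑(Equiv.swap i j) ((1 + C bb * X j) * f)

/-- `∏_{1 ≤ i < j ≤ n-i} (x_i + x_j + β x_i x_j)` (variables 0-indexed). -/
def spTop (n : ℕ) : MvPolynomial (Fin n) Rb :=
  ∏ p ∈ Finset.univ.filter
      (fun p : Fin n × Fin n => p.1 < p.2 ∧ (p.1 : ℕ) + (p.2 : ℕ) + 2 ≤ n),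
    oplus p.1 p.2

/-- `x_1^{n-1} x_2^{n-2} ⋯ x_{n-1}^1` (variables 0-indexed). -/
def grTop (n : ℕ) : MvPolynomial (Fin n) Rb :=
  ∏ a : Fin n, X a ^ (n - 1 - (a : ℕ))

/-- The defining property of the family of symplectic Grothendieck polynomials. -/
def IsSpFam (n : ℕ) (G : Equiv.Perm (Fin n) → MvPolynomial (Fin n) Rb) : Prop :=
  G (revPerm n) = spTop n ∧
    ∀ z : Equiv.Perm (Fin n), IsFPF z →
      ∀ i j : Fin n, (j : ℕ) = (i : ℕ) + 1 →
        z i ≠ j → z j ≠ i → z j < z i →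
          IsDivDiffB i j (G z) (G (Equiv.swap i j * z * Equiv.swap i j))

/-- The defining property of the family of Grothendieck polynomials. -/
def IsGrothFam (n : ℕ) (G : Equiv.Perm (Fin n) → MvPolynomial (Fin n) Rb) : Prop :=
  G (revPerm n) = grTop n ∧
    ∀ (w : Equiv.Perm (Fin n)) (i j : Fin n), (j : ℕ) = (i : ℕ) + 1 →
      w j < w i → IsDivDiffB i j (G w) (G (w * Equiv.swap i j))

/-- The length (number of inversions) of a permutation. -/
def invLen {n : ℕ} (w : Equiv.Perm (Fin n)) : ℕ :=
  (Finset.univ.filter (fun p : Fin n × Fin n => p.1 < p.2 ∧ w p.2 < w p.1)).card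

/-- The fixed-point-free involution length `ℓ_fpf(z) = #{(i,j) : z(i) > z(j) < i < j}`. -/
def fpfLen {n : ℕ} (z : Equiv.Perm (Fin n)) : ℕ :=
  (Finset.univ.filter
      (fun p : Fin n × Fin n => z p.2 < z p.1 ∧ z p.2 < p.1 ∧ p.1 < p.2)).card

/-- The underlying function of `Θ = (1,2)(3,4)⋯(n-1,n)`. -/
def thetaFun (n : ℕ) (hn : n % 2 = 0) (i : Fin n) : Fin n :=
  ⟨if (i : ℕ) % 2 = 0 then (i : ℕ) + 1 else (i : ℕ) - 1, by
    have hi := i.isLt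
    split_ifs with h <;> omega⟩

/-- The fixed-point-free involution `Θ = (1,2)(3,4)⋯(n-1,n)`. -/
def theta (n : ℕ) (hn : n % 2 = 0) : Equiv.Perm (Fin n) :=
  Function.Involutive.toPerm (thetaFun n hn) (by
    intro i
    have hi := i.isLt
    apply Fin.ext
    simp only [thetaFun]
    split_ifs <;> omega)

/-- One step of the partial Hecke action: `heckeStep a z = some (z · s_{a+1})` when defined,
with `a` a 0-indexed letter (so `a` corresponds to the simple transposition of `a+1, a+2`
in 1-indexed notation). -/
def heckeStep {n : ℕ} (a : ℕ) (z : Equiv.Perm (Fin n)) : Option (Equiv.Perm (Fin n)) :=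
  if h : a + 1 < n then
    let i : Fin n := ⟨a, Nat.lt_of_succ_lt h⟩
    let j : Fin n := ⟨a + 1, h⟩
    if z i < z j then some (Equiv.swap i j * z * Equiv.swap i j)
    else if z i = j ∧ z j = i then none
    else if z i ≠ j ∧ z j ≠ i ∧ z j < z i then some z
    else none
  else none

/-- Apply a word of (0-indexed) letters to `z` via the partial Hecke action. -/
def heckeApply {n : ℕ} (l : List ℕ) (z : Equiv.Perm (Fin n)) :
    Option (Equiv.Perm (Fin n)) :=
  l.foldl (fun o a => o.bind (heckeStep a)) (some z)

/-- The simple transposition corresponding to the 0-indexed letter `a`. -/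
def swapAt (n : ℕ) (a : ℕ) : Equiv.Perm (Fin n) :=
  if h : a + 1 < n then Equiv.swap ⟨a, Nat.lt_of_succ_lt h⟩ ⟨a + 1, h⟩ else 1

/-- The permutation `s_{i_1} s_{i_2} ⋯ s_{i_l}` of a word. -/
def wordToPerm (n : ℕ) (l : List ℕ) : Equiv.Perm (Fin n) := (l.map (swapAt n)).prod

/-- `l` is a reduced word for `w`. -/
def IsReducedWord (n : ℕ) (w : Equiv.Perm (Fin n)) (l : List ℕ) : Prop :=
  (∀ a ∈ l, a + 1 < n) ∧ wordToPerm n l = w ∧ l.length = invLen w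

/-- The set of Hecke atoms `B_fpf(z)`. -/
def Bfpf (n : ℕ) (hn : n % 2 = 0) (z : Equiv.Perm (Fin n)) :
    Finset (Equiv.Perm (Fin n)) :=
  @Finset.filter _
    (fun w => ∃ l : List ℕ, IsReducedWord n w l ∧ heckeApply l (theta n hn) = some z)
    (Classical.decPred _) Finset.univ

/-- `extPerm z w` is the permutation `z × w` acting on the first `m` letters by `z`
and the last `n` letters by `w`. -/
def extPerm {m n : ℕ} (z : Equiv.Perm (Fin m)) (w : Equiv.Perm (Fin n)) :
    Equiv.Perm (Fin (m + n)) :=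
  finSumFinEquiv.symm.trans ((Equiv.sumCongr z w).trans finSumFinEquiv)

/-- `rank(z_{[i][j]}) = #{k ∈ [j] : z(k) ≤ i}` (1-indexed sizes `i, j`). -/
def permRank {n : ℕ} (z : Equiv.Perm (Fin n)) (i j : ℕ) : ℕ :=
  (Finset.univ.filter (fun k : Fin n => (k : ℕ) < j ∧ ((z k : Fin n) : ℕ) < i)).card

/-- The rank of the upper-left `i × j` corner of `A` (1-indexed sizes `i, j ≤ n`). -/
def cornerRank {n : ℕ} (A : Matrix (Fin n) (Fin n) ℂ) (i j : ℕ) : ℕ :=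
  Matrix.rank (Matrix.of fun (a : Fin (min i n)) (b : Fin (min j n)) =>
    A ⟨(a : ℕ), lt_of_lt_of_le a.isLt (min_le_right i n)⟩
      ⟨(b : ℕ), lt_of_lt_of_le b.isLt (min_le_right j n)⟩)

/-- The orthogonal Rothe diagram `D^O(z) = {(i, z(j)) : z(i) > z(j) ≤ i < j}` (0-indexed). -/
def DO (n : ℕ) (z : Equiv.Perm (Fin n)) : Finset (Fin n × Fin n) :=
  Finset.image (fun p : Fin n × Fin n => (p.1, z p.2))
    (Finset.univ.filter (fun p : Fin n × Fin n => z p.2 < z p.1 ∧ z p.2 ≤ p.1 ∧ p.1 < p.2))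

/-- The symplectic Rothe diagram `D^Sp(z) = {(i, z(j)) : z(i) > z(j) < i < j}` (0-indexed). -/
def DSp (n : ℕ) (z : Equiv.Perm (Fin n)) : Finset (Fin n × Fin n) :=
  Finset.image (fun p : Fin n × Fin n => (p.1, z p.2))
    (Finset.univ.filter (fun p : Fin n × Fin n => z p.2 < z p.1 ∧ z p.2 < p.1 ∧ p.1 < p.2))

/-- The essential set `Ess(D) = {(i,j) ∈ D : (i,j+1) ∉ D and (i+1,j) ∉ D}`. -/
def Ess {n : ℕ} (D : Finset (Fin n × Fin n)) : Finset (Fin n × Fin n) :=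
  D.filter (fun p =>
    (∀ q ∈ D, ¬(q.1 = p.1 ∧ (q.2 : ℕ) = (p.2 : ℕ) + 1)) ∧
    (∀ q ∈ D, ¬((q.1 : ℕ) = (p.1 : ℕ) + 1 ∧ q.2 = p.2)))

/-- A permutation is vexillary if it avoids the pattern 2143. -/
def Vexillary {n : ℕ} (z : Equiv.Perm (Fin n)) : Prop :=
  ¬ ∃ i j k l : Fin n, i < j ∧ j < k ∧ k < l ∧ z j < z i ∧ z i < z l ∧ z l < z k

/-- The ideal of `ℤ[x_1,…,x_N]` generated by symmetric polynomials with zero constant term. -/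
def ILambda (N : ℕ) : Ideal (MvPolynomial (Fin N) ℤ) :=
  Ideal.span {f : MvPolynomial (Fin N) ℤ |
    (∀ σ : Equiv.Perm (Fin N), rename (⇑σ) f = f) ∧ coeff 0 f = 0}

/-- Substitute `x_j = 0` for all `j > n`, producing a polynomial in `x_1,…,x_n`. -/
def truncVars (n N : ℕ) (f : MvPolynomial (Fin N) Rb) : MvPolynomial (Fin n) Rb :=
  aeval (fun i : Fin N => if h : (i : ℕ) < n then X ⟨(i : ℕ), h⟩ else 0) f

/-- The order used to list the elements of a pipe-dream subset `S`:
rows weakly increasing, columns strictly decreasing within a row. -/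
def rowOrder {n : ℕ} (p q : Fin n × Fin n) : Prop :=
  p.1 < q.1 ∨ (p.1 = q.1 ∧ q.2 < p.2)

/-- `δ(S)` is a symplectic Hecke word for `z` (with Hecke words computed from `Θ`);
here `L` is the listing of `S` in the order `rowOrder`, and `(a,b) ∈ S` (0-indexed)
contributes the 0-indexed letter `a + b`, i.e. the 1-indexed letter `(b+1)+(a+1)-1`. -/
def DeltaHeckeWord (n : ℕ) (hn : n % 2 = 0) (z : Equiv.Perm (Fin n))
    (S : Finset (Fin n × Fin n)) : Prop :=
  ∃ L : List (Fin n × Fin n), L.toFinset = S ∧ L.Chain' rowOrder ∧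
    heckeApply (L.map (fun p => (p.1 : ℕ) + (p.2 : ℕ))) (theta n hn) = some z


def shapeFinset (n : ℕ) (ν : ℕ → ℕ) : Finset (Fin n × Fin n) :=
  Finset.univ.filter (fun p : Fin n × Fin n =>
    (p.2 : ℕ) + 1 ≤ (p.1 : ℕ) ∧ (p.1 : ℕ) ≤ (p.2 : ℕ) + ν (p.2 : ℕ))

def Crit (n : ℕ) (z : Equiv.Perm (Fin n)) (ν : ℕ → ℕ) : Prop :=
  ∀ i b : Fin n,
    ((b : ℕ) < (i : ℕ) ∧ (i : ℕ) < (z b : ℕ) ∧ (b : ℕ) < (z i : ℕ)) ↔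
      ((b : ℕ) + 1 ≤ (i : ℕ) ∧ (i : ℕ) ≤ (b : ℕ) + ν (b : ℕ))

def ShapeOK (ν : ℕ → ℕ) : Prop := ∀ b : ℕ, ν (b + 1) ≠ 0 → ν (b + 1) < ν b

lemma mem_DSp {n : ℕ} (z : Equiv.Perm (Fin n)) (hinv : ∀ x, z (z x) = x)
    (i y : Fin n) :
    (i, y) ∈ DSp n z ↔ ((y : ℕ) < (i : ℕ) ∧ (i : ℕ) < (z y : ℕ) ∧ (y : ℕ) < (z i : ℕ)) := by
  unfold DSp
  simp only [Finset.mem_image, Finset.mem_filter, Finset.mem_univ, true_and, Prod.mk.injEq,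
    Prod.exists, Fin.lt_def]
  constructor
  · rintro ⟨a, b, ⟨h1, h2, h3⟩, rfl, rfl⟩
    exact ⟨h2, by rw [hinv b]; exact h3, h1⟩
  · rintro ⟨h1, h2, h3⟩
    refine ⟨i, z y, ⟨?_, ?_, ?_⟩, rfl, hinv y⟩
    · rw [hinv y]; exact h3
    · rw [hinv y]; exact h1
    · exact h2

lemma oplus_comm {n : ℕ} (i j : Fin n) : oplus i j = oplus j i := by
  unfold oplus; ring

lemma rename_oplus {n : ℕ} (σ : Equiv.Perm (Fin n)) (i j : Fin n) :
    rename ⇑σ (oplus i j) = oplus (σ i) (σ j) := by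
  simp [oplus]

lemma X_sub_X_ne_zero {n : ℕ} {i j : Fin n} (h : i ≠ j) :
    (X i - X j : MvPolynomial (Fin n) Rb) ≠ 0 := by
  intro hc
  have h2 : (X i : MvPolynomial (Fin n) Rb) = X j := by
    have := sub_eq_zero.mp hc
    exact this
  have h3 := congrArg (coeff (Finsupp.single i 1)) h2
  rw [coeff_X, coeff_X'] at h3
  have : ¬ Finsupp.single j 1 = Finsupp.single i 1 := by
    intro he
    exact h ((Finsupp.single_left_inj (by norm_num)).mp he.symm)
  rw [if_neg this] at h3
  exact one_ne_zero (by simpa using h3 : (1 : Rb) = 0)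

lemma divdiff_factor {n : ℕ} (i j c : Fin n) (hij : i ≠ j) (hci : c ≠ i) (hcj : c ≠ j)
    (h : MvPolynomial (Fin n) Rb) (hinv : rename ⇑(Equiv.swap i j) h = h) :
    IsDivDiffB i j (oplus i c * h) h := by
  unfold IsDivDiffB
  have e1 : rename ⇑(Equiv.swap i j) ((1 + C bb * X j) * (oplus i c * h))
      = (1 + C bb * X i) * (oplus j c * h) := by
    rw [map_mul, map_mul, map_add, map_one, map_mul, rename_C, rename_X, rename_oplus, hinv,
      Equiv.swap_apply_left, Equiv.swap_apply_right,
      Equiv.swap_apply_of_ne_of_ne hci hcj]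
  rw [e1]
  unfold oplus
  ring

lemma shape_chain {ν : ℕ → ℕ} (h : ShapeOK ν) :
    ∀ d a : ℕ, ν (a + d) ≠ 0 → ν (a + d) + d ≤ ν a := by
  intro d
  induction d with
  | zero => intro a _; simp
  | succ d ih =>
    intro a hne
    have h1 : ν (a + d + 1) < ν (a + d) := h _ (by rwa [show a + (d+1) = a + d + 1 by omega] at hne)
    have h2 : ν (a + d) ≠ 0 := by omega
    have := ih a h2
    have : ν (a + (d+1)) = ν (a + d + 1) := by ring_nf
    omega

section ctx
variable {n : ℕ} {z : Equiv.Perm (Fin n)} {ν : ℕ → ℕ}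

lemma U0 (hn : 2 ≤ n) (hcrit : Crit n z ν) (hsh : ShapeOK ν) :
    ∀ b : ℕ, b < n → ν b ≠ 0 → b + ν b + 2 ≤ n := by
  intro b hb hne
  by_contra hcon
  rcases Nat.lt_or_ge b (n-1) with hb2 | hb2
  · have h1 := (hcrit ⟨n-1, by omega⟩ ⟨b, hb⟩).mpr (by simp only [Fin.val_mk]; omega)
    have := (z ⟨n-1, by omega⟩).isLt
    have := (z ⟨b, hb⟩).isLt
    simp only [Fin.val_mk] at h1
    omega
  · have hbn : b = n - 1 := by omega
    have hch := shape_chain hsh b 0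
    rw [Nat.zero_add] at hch
    have hν0 : ν 0 ≠ 0 := by have := hch hne; omega
    have h0 : n - 1 ≤ 0 + ν 0 := by have := hch hne; omega
    have h1 := (hcrit ⟨n-1, by omega⟩ ⟨0, by omega⟩).mpr (by simp only [Fin.val_mk]; omega)
    have := (z ⟨n-1, by omega⟩).isLt
    have := (z ⟨0, by omega⟩).isLt
    simp only [Fin.val_mk] at h1
    omega

lemma Ubound (hn : 2 ≤ n) (hcrit : Crit n z ν) (hsh : ShapeOK ν) :
    ∀ b : ℕ, b < n → ν b ≠ 0 → 2 * b + ν b + 2 ≤ n := by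
  intro b hb hne
  have key : ∀ a : ℕ, (ha : a ≤ b) → b + ν b + 1 ≤ ((z ⟨a, by omega⟩ : Fin n) : ℕ) := by
    intro a ha
    have hch := shape_chain hsh (b - a) a
    rw [show a + (b - a) = b by omega] at hch
    have hνa : ν b + (b - a) ≤ ν a := hch hne
    have hνane : ν a ≠ 0 := by omega
    have hu0 := U0 hn hcrit hsh a (by omega) hνane
    have h1 := (hcrit ⟨a + ν a, by omega⟩ ⟨a, by omega⟩).mpr (by simp only [Fin.val_mk]; omega)
    simp only [Fin.val_mk] at h1
    omega
  classical
  set f : ℕ → ℕ := fun a => if h : a < n then ((z ⟨a, h⟩ : Fin n) : ℕ) else 0 with hf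
  have hinj : Set.InjOn f (Finset.range (b+1)) := by
    intro a1 h1 a2 h2 he
    simp only [Finset.coe_range, Set.mem_Iio] at h1 h2
    have ha1 : a1 < n := by omega
    have ha2 : a2 < n := by omega
    rw [hf] at he
    simp only [dif_pos ha1, dif_pos ha2] at he
    have : z ⟨a1, ha1⟩ = z ⟨a2, ha2⟩ := Fin.ext he
    have := z.injective this
    simpa [Fin.mk.injEq] using this
  have hsub : (Finset.range (b+1)).image f ⊆ Finset.Icc (b + ν b + 1) (n - 1) := by
    intro x hx
    simp only [Finset.mem_image, Finset.mem_range] at hx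
    obtain ⟨a, ha, rfl⟩ := hx
    have han : a < n := by omega
    rw [hf]
    simp only [dif_pos han]
    have := key a (by omega)
    have := (z ⟨a, han⟩).isLt
    simp only [Finset.mem_Icc]
    omega
  have hcard := Finset.card_le_card hsub
  rw [Finset.card_image_of_injOn hinj, Finset.card_range, Nat.card_Icc] at hcard
  omega

end ctx


lemma prod_swap_invariant {n : ℕ} (σ : Equiv.Perm (Fin n)) (S : Finset (Fin n × Fin n))
    (hfix : ∀ p ∈ S, σ p.2 = p.2) (hmap : ∀ p ∈ S, ((σ p.1, p.2) : Fin n × Fin n) ∈ S)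
    (hσσ : ∀ x, σ (σ x) = x) :
    rename ⇑σ (∏ p ∈ S, oplus p.1 p.2) = ∏ p ∈ S, oplus p.1 p.2 := by
  rw [map_prod]
  have hcg : ∀ p ∈ S, rename ⇑σ (oplus p.1 p.2) = oplus (σ p.1) p.2 := by
    intro p hp
    rw [rename_oplus, hfix p hp]
  rw [Finset.prod_congr rfl hcg]
  apply Finset.prod_nbij' (fun p : Fin n × Fin n => (σ p.1, p.2))
    (fun p : Fin n × Fin n => (σ p.1, p.2))
  · exact hmap
  · exact hmap
  · intro p hp
    rw [Prod.ext_iff]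
    exact ⟨hσσ p.1, rfl⟩
  · intro p hp
    rw [Prod.ext_iff]
    exact ⟨hσσ p.1, rfl⟩
  · intro p _
    rfl

set_option maxHeartbeats 1000000 in
lemma step_crit {n : ℕ} {z z' : Equiv.Perm (Fin n)} {ν ν' : ℕ → ℕ}
    {c m r : ℕ} {w iF jF cF : Fin n}
    (hcrit : Crit n z ν)
    (hQc : 2 * c + m + 2 < n)
    (hmdef : ν c = m) (hrdef : r = c + m + 1)
    (f1r : ν r = 0) (f1r1 : ν (r + 1) = 0)
    (f1' : ∀ b, c < b → ν b ≠ 0 → b + ν b ≤ c + m)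
    (hiFv : (iF : ℕ) = r) (hjFv : (jF : ℕ) = r + 1) (hcFv : (cF : ℕ) = c)
    (f3c : z cF = iF) (f3r : z iF = cF)
    (hinv : ∀ x, z (z x) = x)
    (hwdef : w = z jF) (hzw : z w = jF)
    (hwr : (w : ℕ) ≠ r) (hwr1 : (w : ℕ) ≠ r + 1) (hwc : (w : ℕ) ≠ c)
    (f4 : c < (w : ℕ))
    (f5 : ∀ x : Fin n, r < (x : ℕ) → (x : ℕ) < (w : ℕ) → (x : ℕ) ≠ r + 1 → (z x : ℕ) < r)
    (hz'c : z' cF = jF) (hz'i : z' iF = w) (hz'j : z' jF = cF) (hz'w : z' w = iF)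
    (hz'other : ∀ x : Fin n, (x : ℕ) ≠ c → (x : ℕ) ≠ r → (x : ℕ) ≠ r + 1 →
      (x : ℕ) ≠ (w : ℕ) → z' x = z x)
    (hνv : ∀ b, ν' b = if b = c then m + 1 else ν b) :
    Crit n z' ν' := by

  intro I B
  have hzIn := (z I).isLt
  have hzBn := (z B).isLt
  have hwn := w.isLt
  have hIn := I.isLt
  have hBn := B.isLt
  simp only [hνv]
  by_cases hbc : (B : ℕ) = c
  · -- column c
    have hB : B = cF := Fin.ext (hbc.trans hcFv.symm)
    have hz'B : (z' B : ℕ) = r + 1 := by rw [hB, hz'c, hjFv]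
    rw [if_pos hbc, hz'B]
    constructor
    · rintro ⟨h1, h2, h3⟩
      omega
    · rintro ⟨h1, h2⟩
      refine ⟨by omega, by omega, ?_⟩
      by_cases hIr : (I : ℕ) = r
      · have hI : I = iF := Fin.ext (hIr.trans hiFv.symm)
        rw [hI, hz'i]
        omega
      · have hsh1 := (hcrit I cF).mpr (by rw [hcFv]; omega)
        rw [hcFv] at hsh1
        by_cases hIw : (I : ℕ) = (w : ℕ)
        · have hI : I = w := Fin.ext hIw
          rw [hI, hz'w, hiFv]
          omega
        · rw [hz'other I (by omega) hIr (by omega) hIw]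
          omega
  · by_cases hbr : (B : ℕ) = r
    · -- row r : both sides false
      have hB : B = iF := Fin.ext (hbr.trans hiFv.symm)
      have hz'B : (z' B : ℕ) = (w : ℕ) := by rw [hB, hz'i]
      rw [if_neg hbc, hz'B]
      constructor
      · rintro ⟨h1, h2, h3⟩
        exfalso
        by_cases hIj : (I : ℕ) = r + 1
        · have hI : I = jF := Fin.ext (hIj.trans hjFv.symm)
          rw [hI, hz'j, hcFv] at h3
          omega
        · have hIw : (I : ℕ) ≠ (w : ℕ) := by omega
          have hIc : (I : ℕ) ≠ c := by omega
          have hIr' : (I : ℕ) ≠ r := by omega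
          rw [hz'other I hIc hIr' hIj hIw] at h3
          have := f5 I (by omega) (by omega) hIj
          omega
      · rintro ⟨h1, h2⟩
        exfalso
        rw [hbr, f1r] at h2
        omega
    · by_cases hbj : (B : ℕ) = r + 1
      · -- row r+1 : both sides false
        have hB : B = jF := Fin.ext (hbj.trans hjFv.symm)
        have hz'B : (z' B : ℕ) = c := by rw [hB, hz'j, hcFv]
        rw [if_neg hbc, hz'B]
        constructor
        · rintro ⟨h1, h2, h3⟩
          omega
        · rintro ⟨h1, h2⟩
          exfalso
          rw [hbj, f1r1] at h2
          omega
      · by_cases hbw : (B : ℕ) = (w : ℕ)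
        · -- column w
          have hB : B = w := Fin.ext hbw
          have hz'B : (z' B : ℕ) = r := by rw [hB, hz'w, hiFv]
          have hνBw : ν (B : ℕ) = ν (w : ℕ) := by rw [hbw]
          rw [if_neg hbc, hz'B]
          rcases Nat.lt_or_ge (w : ℕ) r with hwlt | hwgt
          · -- c < w < r
            constructor
            · rintro ⟨h1, h2, h3⟩
              have hIc : (I : ℕ) ≠ c := by omega
              have hIr : (I : ℕ) ≠ r := by omega
              have hIj : (I : ℕ) ≠ r + 1 := by omega
              have hIw : (I : ℕ) ≠ (w : ℕ) := by omega
              rw [hz'other I hIc hIr hIj hIw] at h3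
              have hp := (hcrit I w).mp
                ⟨by omega, by rw [hzw, hjFv]; omega, by omega⟩
              omega
            · rintro ⟨h1, h2⟩
              have hp := (hcrit I w).mpr ⟨by omega, by omega⟩
              rw [hzw, hjFv] at hp
              have hIr : (I : ℕ) ≠ r := by
                intro he
                have hI : I = iF := Fin.ext (he.trans hiFv.symm)
                rw [hI, f3r, hcFv] at hp
                omega
              refine ⟨by omega, by omega, ?_⟩
              have hIc : (I : ℕ) ≠ c := by omega
              have hIj : (I : ℕ) ≠ r + 1 := by omega
              by_cases hIw : (I : ℕ) = (w : ℕ)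
              · omega
              · rw [hz'other I hIc hIr hIj hIw]
                omega
          · -- w > r+1 : both sides false
            have hwgt2 : r + 1 < (w : ℕ) := by omega
            constructor
            · rintro ⟨h1, h2, h3⟩
              exfalso
              omega
            · rintro ⟨h1, h2⟩
              exfalso
              have hνw : ν (w : ℕ) = 0 := by
                by_contra hne
                have := f1' (w : ℕ) (by omega) hne
                omega
              omega
        · -- generic column B
          rw [if_neg hbc]
          have hz'B : z' B = z B := hz'other B hbc hbr hbj hbw
          rcases Nat.lt_or_ge (B : ℕ) c with hblt | hbgt
          · -- B < c
            constructor
            · rintro ⟨h1, h2, h3⟩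
              rw [hz'B] at h2
              refine (hcrit I B).mp ⟨h1, h2, ?_⟩
              by_cases hIc : (I : ℕ) = c
              · have hI : I = cF := Fin.ext (hIc.trans hcFv.symm)
                rw [hI, f3c, hiFv]
                omega
              · by_cases hIr : (I : ℕ) = r
                · have hI : I = iF := Fin.ext (hIr.trans hiFv.symm)
                  rw [hI, f3r, hcFv]
                  omega
                · by_cases hIj : (I : ℕ) = r + 1
                  · have hI : I = jF := Fin.ext (hIj.trans hjFv.symm)
                    rw [hI, ← hwdef]
                    omega
                  · by_cases hIw : (I : ℕ) = (w : ℕ)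
                    · have hI : I = w := Fin.ext hIw
                      rw [hI, hzw, hjFv]
                      omega
                    · rw [← hz'other I hIc hIr hIj hIw]
                      exact h3
            · rintro ⟨h1, h2⟩
              have hp := (hcrit I B).mpr ⟨h1, h2⟩
              refine ⟨hp.1, by rw [hz'B]; exact hp.2.1, ?_⟩
              by_cases hIc : (I : ℕ) = c
              · have hI : I = cF := Fin.ext (hIc.trans hcFv.symm)
                rw [hI, hz'c, hjFv]
                omega
              · by_cases hIr : (I : ℕ) = r
                · have hI : I = iF := Fin.ext (hIr.trans hiFv.symm)
                  rw [hI, hz'i]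
                  omega
                · by_cases hIj : (I : ℕ) = r + 1
                  · have hI : I = jF := Fin.ext (hIj.trans hjFv.symm)
                    rw [hI, hz'j, hcFv]
                    omega
                  · by_cases hIw : (I : ℕ) = (w : ℕ)
                    · have hI : I = w := Fin.ext hIw
                      rw [hI, hz'w, hiFv]
                      omega
                    · rw [hz'other I hIc hIr hIj hIw]
                      exact hp.2.2
          · -- B > c
            have hbgt' : c < (B : ℕ) := by omega
            constructor
            · rintro ⟨h1, h2, h3⟩
              rw [hz'B] at h2
              by_cases hIc : (I : ℕ) = c
              · exfalso
                omega
              · by_cases hIj : (I : ℕ) = r + 1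
                · exfalso
                  have hI : I = jF := Fin.ext (hIj.trans hjFv.symm)
                  rw [hI, hz'j, hcFv] at h3
                  omega
                · by_cases hIr : (I : ℕ) = r
                  · exfalso
                    have hI : I = iF := Fin.ext (hIr.trans hiFv.symm)
                    rw [hI, hz'i] at h3
                    have hzB1 : (z B : ℕ) ≠ r + 1 := by
                      intro he
                      have hzB : z B = jF := Fin.ext (he.trans hjFv.symm)
                      have h5 := (congrArg z hzB).symm.trans (hinv B)
                      rw [← hwdef] at h5
                      exact hbw (congrArg Fin.val h5).symm
                    have hp := (hcrit jF B).mp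
                      ⟨by rw [hjFv]; omega, by rw [hjFv]; omega,
                       by rw [← hwdef]; exact h3⟩
                    rw [hjFv] at hp
                    have hνB : ν (B : ℕ) ≠ 0 := by omega
                    have := f1' (B : ℕ) hbgt' hνB
                    omega
                  · by_cases hIw : (I : ℕ) = (w : ℕ)
                    · refine (hcrit I B).mp ⟨h1, h2, ?_⟩
                      have hI : I = w := Fin.ext hIw
                      rw [hI, hzw, hjFv]
                      by_contra hno
                      have hf := f5 B (by omega) (by omega) (by omega)
                      omega
                    · rw [hz'other I hIc hIr hIj hIw] at h3
                      exact (hcrit I B).mp ⟨h1, h2, h3⟩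
            · rintro ⟨h1, h2⟩
              have hp := (hcrit I B).mpr ⟨h1, h2⟩
              have hνB : ν (B : ℕ) ≠ 0 := by omega
              have hBb := f1' (B : ℕ) hbgt' hνB
              refine ⟨hp.1, by rw [hz'B]; exact hp.2.1, ?_⟩
              have hIc : (I : ℕ) ≠ c := by omega
              have hIr : (I : ℕ) ≠ r := by omega
              have hIj : (I : ℕ) ≠ r + 1 := by omega
              by_cases hIw : (I : ℕ) = (w : ℕ)
              · have hI : I = w := Fin.ext hIw
                rw [hI, hz'w, hiFv]
                omega
              · rw [hz'other I hIc hIr hIj hIw]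
                exact hp.2.2
set_option maxHeartbeats 1000000 in

lemma main_lemma {n : ℕ} (hn2 : 2 ≤ n) (hev : n % 2 = 0)
    (G : Equiv.Perm (Fin n) → MvPolynomial (Fin n) Rb) (hG : IsSpFam n G) :
    ∀ t : ℕ, ∀ z : Equiv.Perm (Fin n), ∀ ν : ℕ → ℕ,
      IsFPF z → Crit n z ν → ShapeOK ν →
      n * n + 1 ≤ (shapeFinset n ν).card + t →
      G z = ∏ p ∈ shapeFinset n ν, oplus p.1 p.2 := by
  intro t
  induction t with
  | zero =>
    intro z ν _ _ _ hcard
    exfalso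
    have h1 : (shapeFinset n ν).card ≤ (Finset.univ : Finset (Fin n × Fin n)).card :=
      Finset.card_le_card (Finset.filter_subset _ _)
    rw [Finset.card_univ] at h1
    simp only [Fintype.card_prod, Fintype.card_fin] at h1
    omega
  | succ t ih =>
    intro z ν hfpfz hcrit hsh hcard
    have hinv : ∀ x, z (z x) = x := by
      intro x
      have h := Equiv.ext_iff.mp hfpfz.1 x
      simpa [Equiv.Perm.mul_apply] using h
    have hfp : ∀ x, z x ≠ x := hfpfz.2
    by_cases hex : ∃ b, 2 * b + ν b + 2 < n
    · -- step case: add a box at the minimal non-staircase column c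
      classical
      obtain ⟨c, hQc, hmin⟩ : ∃ c, 2 * c + ν c + 2 < n ∧ ∀ b, b < c → n ≤ 2 * b + ν b + 2 := by
        refine ⟨Nat.find hex, Nat.find_spec hex, fun b hb => ?_⟩
        have := Nat.find_min hex hb
        omega
      obtain ⟨m, hmdef⟩ : ∃ m, ν c = m := ⟨ν c, rfl⟩
      obtain ⟨r, hrdef⟩ : ∃ r, r = c + m + 1 := ⟨_, rfl⟩
      have hr1n : r + 1 < n := by omega
      have hcn : c < n := by omega
      have f0 : ∀ b, b < c → 2 * b + ν b + 2 = n ∧ ν b ≠ 0 := by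
        intro b hb
        have h1 := hmin b hb
        have hne : ν b ≠ 0 := by
          intro h0
          rw [h0] at h1
          omega
        exact ⟨le_antisymm (Ubound hn2 hcrit hsh b (by omega) hne) h1, hne⟩
      have f1r : ν r = 0 := by
        by_contra hne
        have := shape_chain hsh (m + 1) c (by rw [show c + (m+1) = r by omega]; exact hne)
        rw [show c + (m+1) = r by omega] at this
        omega
      have f1r1 : ν (r + 1) = 0 := by
        by_contra hne
        have := shape_chain hsh (m + 2) c (by rw [show c + (m+2) = r+1 by omega]; exact hne)
        rw [show c + (m+2) = r+1 by omega] at this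
        omega
      have f1' : ∀ b, c < b → ν b ≠ 0 → b + ν b ≤ c + m := by
        intro b hb hne
        have := shape_chain hsh (b - c) c (by rw [show c + (b-c) = b by omega]; exact hne)
        rw [show c + (b-c) = b by omega] at this
        omega
      obtain ⟨iF, hiFv⟩ : ∃ x : Fin n, (x : ℕ) = r := ⟨⟨r, by omega⟩, rfl⟩
      obtain ⟨jF, hjFv⟩ : ∃ x : Fin n, (x : ℕ) = r + 1 := ⟨⟨r + 1, hr1n⟩, rfl⟩
      obtain ⟨cF, hcFv⟩ : ∃ x : Fin n, (x : ℕ) = c := ⟨⟨c, hcn⟩, rfl⟩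
      -- z c ≥ r
      have f3a : r ≤ (z cF : ℕ) := by
        rcases Nat.eq_zero_or_pos m with hm0 | hm1
        · by_contra hlt
          have hzc := (z cF).isLt
          have hne : (z cF : ℕ) ≠ c := by
            intro h
            exact hfp cF (Fin.ext (h.trans hcFv.symm))
          have hb0 : (z cF : ℕ) < c := by omega
          have hzb0 : z (z cF) = cF := hinv cF
          have hf0 := f0 _ hb0
          have h1 := (hcrit ⟨n-2-(z cF : ℕ), by omega⟩ (z cF)).mpr
            (by simp only [Fin.val_mk]; omega)
          simp only [Fin.val_mk, hzb0, hcFv] at h1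
          omega
        · have h1 := (hcrit ⟨c + m, by omega⟩ cF).mpr
            (by simp only [Fin.val_mk, hcFv]; omega)
          simp only [Fin.val_mk, hcFv] at h1
          omega
      -- z c = r and z r = c
      have f3 : (z cF : ℕ) = r ∧ (z iF : ℕ) = c := by
        have hnot : ¬ (c < r ∧ r < (z cF : ℕ) ∧ c < (z iF : ℕ)) := by
          intro hcon
          have h1 := (hcrit iF cF).mp (by rw [hiFv, hcFv]; exact hcon)
          rw [hiFv, hcFv, hmdef] at h1
          omega
        rcases Nat.lt_or_ge (z iF : ℕ) (c + 1) with hle | hgt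
        · have hzi := (z iF).isLt
          rcases Nat.lt_trichotomy (z iF : ℕ) c with hlt | heqc | hgt2
          · exfalso
            have hzb0 : z (z iF) = iF := hinv iF
            have hf0 := f0 _ hlt
            have h1 := (hcrit ⟨n-2-(z iF : ℕ), by omega⟩ (z iF)).mpr
              (by simp only [Fin.val_mk]; omega)
            simp only [Fin.val_mk, hzb0, hiFv] at h1
            omega
          · have hz : z iF = cF := Fin.ext (heqc.trans hcFv.symm)
            have h2 := (congrArg z hz).symm.trans (hinv iF)
            constructor
            · rw [h2, hiFv]
            · exact heqc
          · omega
        · have hzc : (z cF : ℕ) ≤ r := by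
            by_contra hh
            exact hnot ⟨by omega, by omega, by omega⟩
          have heq : (z cF : ℕ) = r := by omega
          have hz : z cF = iF := Fin.ext (heq.trans hiFv.symm)
          have h2 := (congrArg z hz).symm.trans (hinv cF)
          exact ⟨heq, by rw [h2, hcFv]⟩
      have f3c : z cF = iF := Fin.ext (f3.1.trans hiFv.symm)
      have f3r : z iF = cF := Fin.ext (f3.2.trans hcFv.symm)
      obtain ⟨w, hwdef⟩ : ∃ w, w = z jF := ⟨_, rfl⟩
      have hzw : z w = jF := by rw [hwdef, hinv]
      have hwr1 : (w : ℕ) ≠ r + 1 := by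
        intro h
        exact hfp jF (Fin.ext (by rw [hwdef] at h; exact h.trans hjFv.symm))
      have hwr : (w : ℕ) ≠ r := by
        intro h
        have hz : w = iF := Fin.ext (h.trans hiFv.symm)
        have h2 : z iF = jF := by rw [← hz, hzw]
        rw [f3r] at h2
        have := congrArg Fin.val h2
        rw [hcFv, hjFv] at this
        omega
      have hwc : (w : ℕ) ≠ c := by
        intro h
        have hz : w = cF := Fin.ext (h.trans hcFv.symm)
        have h2 : z cF = jF := by rw [← hz, hzw]
        rw [f3c] at h2
        have := congrArg Fin.val h2
        rw [hiFv, hjFv] at this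
        omega
      have f4 : c < (w : ℕ) := by
        by_contra hh
        have hb0 : (w : ℕ) < c := by omega
        have hf0 := f0 _ hb0
        have h1 := (hcrit ⟨n-2-(w : ℕ), by omega⟩ w).mpr
          (by simp only [Fin.val_mk]; omega)
        simp only [Fin.val_mk, hzw, hjFv] at h1
        omega
      -- the trick lemma: nothing between r+1 and w links above r
      have f5 : ∀ x : Fin n, r < (x : ℕ) → (x : ℕ) < (w : ℕ) → (x : ℕ) ≠ r + 1 →
          (z x : ℕ) < r := by
        intro x hx1 hx2 hx3
        by_contra hh
        have hzx1 : (z x : ℕ) ≠ r := by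
          intro h
          have hz : z x = iF := Fin.ext (h.trans hiFv.symm)
          have h2 := (congrArg z hz).symm.trans (hinv x)
          rw [f3r] at h2
          have := congrArg Fin.val h2.symm
          rw [hcFv] at this
          omega
        have hzx2 : (z x : ℕ) ≠ r + 1 := by
          intro h
          have hz : z x = jF := Fin.ext (h.trans hjFv.symm)
          have h2 := (congrArg z hz).symm.trans (hinv x)
          rw [← hwdef] at h2
          have := congrArg Fin.val h2.symm
          omega
        have hge : r + 2 ≤ (z x : ℕ) := by omega
        rcases Nat.lt_trichotomy ((x : ℕ)) ((z x : ℕ)) with hlt | heq | hgt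
        · have h1 := (hcrit x jF).mp
            (by rw [hjFv, ← hwdef]; exact ⟨by omega, by omega, by omega⟩)
          rw [hjFv, f1r1] at h1
          omega
        · exact hfp x (Fin.ext heq.symm)
        · have hzxn := (z x).isLt
          have hzzx : z (z x) = x := hinv x
          have h1 := (hcrit (z x) jF).mp
            (by rw [hjFv, ← hwdef, hzzx]; exact ⟨by omega, by omega, by omega⟩)
          rw [hjFv, f1r1] at h1
          omega
      obtain ⟨σ, hσdef⟩ : ∃ σ, σ = Equiv.swap iF jF := ⟨_, rfl⟩
      obtain ⟨z', hz'def⟩ : ∃ z', z' = σ * z * σ := ⟨_, rfl⟩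
      obtain ⟨ν', hν'def⟩ : ∃ ν' : ℕ → ℕ, ν' = fun b => if b = c then m + 1 else ν b := ⟨_, rfl⟩
      have hνv : ∀ b, ν' b = if b = c then m + 1 else ν b := fun b => by rw [hν'def]
      have hijne : iF ≠ jF := by
        intro h
        have := congrArg Fin.val h
        omega
      have hσi : σ iF = jF := by rw [hσdef]; exact Equiv.swap_apply_left _ _
      have hσj : σ jF = iF := by rw [hσdef]; exact Equiv.swap_apply_right _ _
      have hσother : ∀ x : Fin n, (x : ℕ) ≠ r → (x : ℕ) ≠ r + 1 → σ x = x := by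
        intro x h1 h2
        rw [hσdef]
        exact Equiv.swap_apply_of_ne_of_ne
          (fun he => h1 (by rw [he, hiFv])) (fun he => h2 (by rw [he, hjFv]))
      have hσσ : ∀ y, σ (σ y) = y := by
        intro y
        rw [hσdef]
        exact Equiv.swap_apply_self _ _ _
      have hz'ap : ∀ x, z' x = σ (z (σ x)) := by
        intro x
        rw [hz'def]
        rfl
      have hσc : σ cF = cF := hσother cF (by omega) (by omega)
      have hσw : σ w = w := hσother w hwr hwr1
      have hz'c : z' cF = jF := by rw [hz'ap, hσc, f3c, hσi]
      have hz'i : z' iF = w := by rw [hz'ap, hσi, ← hwdef, hσw]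
      have hz'j : z' jF = cF := by rw [hz'ap, hσj, f3r, hσc]
      have hz'w : z' w = iF := by rw [hz'ap, hσw, hzw, hσj]
      have hz'other : ∀ x : Fin n, (x : ℕ) ≠ c → (x : ℕ) ≠ r → (x : ℕ) ≠ r + 1 →
          (x : ℕ) ≠ (w : ℕ) → z' x = z x := by
        intro x h1 h2 h3 h4
        have hσx : σ x = x := hσother x h2 h3
        have hz1 : (z x : ℕ) ≠ r := by
          intro h
          have hz : z x = iF := Fin.ext (h.trans hiFv.symm)
          have h5 := (congrArg z hz).symm.trans (hinv x)
          rw [f3r] at h5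
          exact h1 ((congrArg Fin.val h5).symm.trans hcFv)
        have hz2 : (z x : ℕ) ≠ r + 1 := by
          intro h
          have hz : z x = jF := Fin.ext (h.trans hjFv.symm)
          have h5 := (congrArg z hz).symm.trans (hinv x)
          rw [← hwdef] at h5
          exact h4 (congrArg Fin.val h5).symm
        rw [hz'ap, hσx, hσother (z x) hz1 hz2]
      have hinv' : ∀ x, z' (z' x) = x := by
        intro x
        rw [hz'ap, hz'ap, hσσ, hinv, hσσ]
      have hfp' : ∀ x, z' x ≠ x := by
        intro x h
        rw [hz'ap] at h
        have h2 := congrArg σ h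
        rw [hσσ] at h2
        exact hfp (σ x) h2
      have hfpf' : IsFPF z' := by
        refine ⟨Equiv.ext fun x => ?_, hfp'⟩
        have h1 : (z' * z') x = z' (z' x) := Equiv.Perm.mul_apply _ _ _
        rw [h1, hinv' x]
        rfl
      have hσσp : σ * σ = 1 := by rw [hσdef]; exact Equiv.swap_mul_self _ _
      have hback : σ * z' * σ = z := by
        rw [hz'def, ← mul_assoc, ← mul_assoc, hσσp, one_mul, mul_assoc, hσσp, mul_one]
      have hsh' : ShapeOK ν' := by
        intro b hb
        simp only [hνv] at hb ⊢
        by_cases h1 : b + 1 = c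
        · rw [if_pos h1] at hb ⊢
          rw [if_neg (by omega : ¬ b = c)]
          have := (f0 b (by omega)).1
          omega
        · rw [if_neg h1] at hb ⊢
          by_cases h2 : b = c
          · subst h2
            rw [if_pos rfl]
            have := hsh b hb
            omega
          · rw [if_neg h2]
            exact hsh b hb
      have hnotmem : (iF, cF) ∉ shapeFinset n ν := by
        simp only [shapeFinset, Finset.mem_filter, Finset.mem_univ, true_and, hiFv, hcFv]
        omega
      have hins : shapeFinset n ν' = insert (iF, cF) (shapeFinset n ν) := by
        ext p
        simp only [shapeFinset, Finset.mem_filter, Finset.mem_univ, true_and,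
          Finset.mem_insert, hνv]
        constructor
        · rintro ⟨h1, h2⟩
          by_cases hc1 : (p.2 : ℕ) = c
          · rw [if_pos hc1] at h2
            by_cases hc2 : (p.1 : ℕ) = r
            · left
              rw [Prod.ext_iff]
              exact ⟨Fin.ext (hc2.trans hiFv.symm), Fin.ext (hc1.trans hcFv.symm)⟩
            · right
              refine ⟨h1, ?_⟩
              rw [hc1]
              omega
          · rw [if_neg hc1] at h2
            exact Or.inr ⟨h1, h2⟩
        · rintro (heq | ⟨h1, h2⟩)
          · subst heq
            simp only [hiFv, hcFv, eq_self_iff_true, if_true]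
            omega
          · refine ⟨h1, ?_⟩
            by_cases hc1 : (p.2 : ℕ) = c
            · rw [if_pos hc1]
              rw [hc1] at h2
              omega
            · rw [if_neg hc1]
              exact h2
      have hcard' : (shapeFinset n ν').card = (shapeFinset n ν).card + 1 := by
        rw [hins, Finset.card_insert_of_notMem hnotmem]
      have hcritZ : Crit n z' ν' :=
        step_crit hcrit (by omega) hmdef hrdef f1r f1r1 f1' hiFv hjFv hcFv f3c f3r hinv
          hwdef hzw hwr hwr1 hwc f4 f5 hz'c hz'i hz'j hz'w hz'other hνv
      have hfix : ∀ p ∈ shapeFinset n ν, σ p.2 = p.2 := by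
        intro p hp
        simp only [shapeFinset, Finset.mem_filter, Finset.mem_univ, true_and] at hp
        obtain ⟨h1, h2⟩ := hp
        have hν2 : ν (p.2 : ℕ) ≠ 0 := by omega
        apply hσother
        · intro he
          rw [he] at hν2
          exact hν2 f1r
        · intro he
          rw [he] at hν2
          exact hν2 f1r1
      have hmap : ∀ p ∈ shapeFinset n ν, ((σ p.1, p.2) : Fin n × Fin n) ∈ shapeFinset n ν := by
        intro p hp
        simp only [shapeFinset, Finset.mem_filter, Finset.mem_univ, true_and] at hp ⊢
        obtain ⟨h1, h2⟩ := hp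
        have hν2 : ν (p.2 : ℕ) ≠ 0 := by omega
        have hcol : ((p.2 : ℕ) + ν (p.2 : ℕ) ≤ c + m) ∨
            ((p.2 : ℕ) < c ∧ 2 * (p.2 : ℕ) + ν (p.2 : ℕ) + 2 = n) := by
          rcases Nat.lt_trichotomy ((p.2 : ℕ)) c with h | h | h
          · exact Or.inr ⟨h, (f0 _ h).1⟩
          · left
            rw [h]
            omega
          · exact Or.inl (f1' _ h hν2)
        by_cases hr1 : (p.1 : ℕ) = r
        · have hpi : p.1 = iF := Fin.ext (hr1.trans hiFv.symm)
          rw [hpi, hσi, hjFv]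
          rcases hcol with hA | ⟨hB1, hB2⟩
          · omega
          · omega
        · by_cases hr2 : (p.1 : ℕ) = r + 1
          · have hpj : p.1 = jF := Fin.ext (hr2.trans hjFv.symm)
            rw [hpj, hσj, hiFv]
            rcases hcol with hA | ⟨hB1, hB2⟩
            · omega
            · omega
          · rw [hσother p.1 hr1 hr2]
            exact ⟨h1, h2⟩
      have hren : rename ⇑σ (∏ p ∈ shapeFinset n ν, oplus p.1 p.2) =
          ∏ p ∈ shapeFinset n ν, oplus p.1 p.2 :=
        prod_swap_invariant σ _ hfix hmap hσσ
      have hcne_i : cF ≠ iF := by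
        intro h
        have := congrArg Fin.val h
        omega
      have hcne_j : cF ≠ jF := by
        intro h
        have := congrArg Fin.val h
        omega
      have hdd2 : IsDivDiffB iF jF (∏ p ∈ shapeFinset n ν', oplus p.1 p.2)
          (∏ p ∈ shapeFinset n ν, oplus p.1 p.2) := by
        rw [hins, Finset.prod_insert hnotmem]
        refine divdiff_factor iF jF cF hijne hcne_i hcne_j _ ?_
        rw [← hσdef]
        exact hren
      have hIH : G z' = ∏ p ∈ shapeFinset n ν', oplus p.1 p.2 :=
        ih z' ν' hfpf' hcritZ hsh' (by omega)
      have hne1 : z' iF ≠ jF := by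
        rw [hz'i]
        intro h
        exact hwr1 (by rw [h, hjFv])
      have hne2 : z' jF ≠ iF := by
        rw [hz'j]
        intro h
        have := congrArg Fin.val h
        rw [hcFv, hiFv] at this
        omega
      have hlt : z' jF < z' iF := by
        rw [hz'j, hz'i, Fin.lt_def, hcFv]
        exact f4
      have hGd := hG.2 z' hfpf' iF jF (by rw [hjFv, hiFv]) hne1 hne2 hlt
      rw [hσdef] at hback
      rw [hback] at hGd
      unfold IsDivDiffB at hGd hdd2
      rw [hIH] at hGd
      exact mul_left_cancel₀ (X_sub_X_ne_zero hijne) (hGd.trans hdd2.symm)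
    · -- base case: full staircase, z = revPerm n
      push_neg at hex
      have hstair1 : ∀ b : ℕ, b < n → 2 * b + 2 < n → 2 * b + ν b + 2 = n := by
        intro b hb h2
        have h3 := hex b
        have hne : ν b ≠ 0 := by omega
        have := Ubound hn2 hcrit hsh b hb hne
        omega
      have hstair2 : ∀ b : ℕ, b < n → n ≤ 2 * b + 2 → ν b = 0 := by
        intro b hb h2
        by_contra hne
        have := Ubound hn2 hcrit hsh b hb hne
        omega
      have hrev : ∀ b : ℕ, ∀ hb : b < n, 2 * b + 2 < n → ((z ⟨b, hb⟩ : Fin n) : ℕ) = n - 1 - b := by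
        intro b
        induction b using Nat.strong_induction_on with
        | _ b IH =>
          intro hb h2b
          have hνb := hstair1 b hb h2b
          have hge : n - 2 - b < ((z ⟨b, hb⟩ : Fin n) : ℕ) := by
            have h1 := (hcrit ⟨n-2-b, by omega⟩ ⟨b, hb⟩).mpr
              (by simp only [Fin.val_mk]; omega)
            simp only [Fin.val_mk] at h1
            omega
          have hlt := (z ⟨b, hb⟩).isLt
          by_contra hne
          set v := ((z ⟨b, hb⟩ : Fin n) : ℕ) with hv
          have hvn : n - b ≤ v := by omega
          have ha : n - 1 - v < b := by omega
          have h2a : 2 * (n - 1 - v) + 2 < n := by omega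
          have := IH (n - 1 - v) ha (by omega) h2a
          have heq : z ⟨n - 1 - v, by omega⟩ = z ⟨b, hb⟩ := by
            apply Fin.ext
            omega
          have := z.injective heq
          simp only [Fin.mk.injEq] at this
          omega
      have hmid : ∀ x : Fin n, ((x : ℕ) = n / 2 - 1) → ((z x : ℕ) = n / 2) := by
        intro x hx
        have hn4 : 4 ≤ n ∨ n = 2 := by omega
        have hxn : (x : ℕ) < n := x.isLt
        have hzx := (z x).isLt
        have hne : (z x : ℕ) ≠ (x : ℕ) := by
          intro h; exact hfp x (Fin.ext h)
        rcases Nat.lt_trichotomy ((z x : ℕ)) (n / 2 - 1) with h | h | h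
        · exfalso
          have h2 : 2 * ((z x : ℕ)) + 2 < n := by omega
          have hr := hrev (z x : ℕ) (by omega) h2
          have : z ⟨(z x : ℕ), by omega⟩ = z (z x) := by congr 1
          rw [this, hinv] at hr
          omega
        · exfalso; omega
        · -- z x > n/2 - 1, show = n/2
          by_contra hne2
          have hgt : n / 2 + 1 ≤ (z x : ℕ) := by omega
          set a := n - 1 - (z x : ℕ) with hadef
          have h2a : 2 * a + 2 < n := by omega
          have hr := hrev a (by omega) h2a
          have heq : z ⟨a, by omega⟩ = z x := by
            apply Fin.ext
            omega
          have hax := congrArg Fin.val (z.injective heq)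
          simp only [Fin.val_mk] at hax
          omega
      have hrevall : ∀ x : Fin n, (z x : ℕ) = n - 1 - (x : ℕ) := by
        intro x
        have hxn := x.isLt
        rcases Nat.lt_trichotomy (2 * (x : ℕ) + 2) n with h | h | h
        · have := hrev (x : ℕ) hxn h
          have hc : (⟨(x : ℕ), hxn⟩ : Fin n) = x := Fin.ext rfl
          rwa [hc] at this
        · -- 2x + 2 = n : x = n/2 - 1
          have := hmid x (by omega)
          omega
        · -- x ≥ n/2
          rcases Nat.lt_trichotomy (x : ℕ) (n / 2) with h1 | h1 | h1
          · omega
          · -- x = n/2 : z x = n/2 - 1 via hmid and involution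
            have hm := hmid ⟨n/2 - 1, by omega⟩ (by simp only [Fin.val_mk])
            have heq : z ⟨n/2 - 1, by omega⟩ = x := by
              apply Fin.ext; omega
            have h5 := (congrArg z heq).symm.trans (hinv ⟨n/2 - 1, by omega⟩)
            have h6 := congrArg Fin.val h5
            simp only [Fin.val_mk] at h6
            omega
          · -- x > n/2 : a := n-1-x < n/2 - 1
            set a := n - 1 - (x : ℕ) with hadef
            have h2a : 2 * a + 2 < n := by omega
            have hr := hrev a (by omega) h2a
            have heq : z ⟨a, by omega⟩ = x := by apply Fin.ext; omega
            have h5 := (congrArg z heq).symm.trans (hinv ⟨a, by omega⟩)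
            have h6 := congrArg Fin.val h5
            simp only [Fin.val_mk] at h6
            omega
      have hzrev : z = revPerm n := by
        apply Equiv.ext
        intro x
        apply Fin.ext
        rw [hrevall x]
        show _ = ((Fin.rev x : Fin n) : ℕ)
        rw [Fin.val_rev]
        omega
      have hshape : shapeFinset n ν =
          Finset.univ.filter (fun p : Fin n × Fin n =>
            (p.2 : ℕ) < (p.1 : ℕ) ∧ (p.1 : ℕ) + (p.2 : ℕ) + 2 ≤ n) := by
        ext p
        simp only [shapeFinset, Finset.mem_filter, Finset.mem_univ, true_and]
        have h2 := p.2.isLt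
        have h1 := p.1.isLt
        rcases Nat.lt_trichotomy (2 * (p.2 : ℕ) + 2) n with h | h | h
        · have := hstair1 (p.2 : ℕ) h2 h
          omega
        · have := hstair2 (p.2 : ℕ) h2 (by omega)
          omega
        · have := hstair2 (p.2 : ℕ) h2 (by omega)
          omega
      rw [hzrev, hG.1, hshape]
      unfold spTop
      apply Finset.prod_nbij' (fun p => (p.2, p.1)) (fun p => (p.2, p.1))
      · intro p hp
        simp only [Finset.mem_filter, Finset.mem_univ, true_and, Fin.lt_def] at hp ⊢
        omega
      · intro p hp
        simp only [Finset.mem_filter, Finset.mem_univ, true_and, Fin.lt_def] at hp ⊢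
        omega
      · intro p _; rfl
      · intro p _; rfl
      · intro p _
        exact oplus_comm _ _

theorem statement5 (n : ℕ) (hpos : 0 < n) (hev : n % 2 = 0)
    (G : Equiv.Perm (Fin n) → MvPolynomial (Fin n) Rb) (hG : IsSpFam n G)
    (z : Equiv.Perm (Fin n)) (hz : IsFPF z)
    (k : ℕ) (μ : Fin k → ℕ) (hanti : StrictAnti μ) (hposμ : ∀ j, 0 < μ j)
    (hdom : ∀ p : Fin n × Fin n, p ∈ DSp n z ↔
      ∃ h : (p.2 : ℕ) < k,
        (p.2 : ℕ) + 1 ≤ (p.1 : ℕ) ∧ (p.1 : ℕ) ≤ (p.2 : ℕ) + μ ⟨(p.2 : ℕ), h⟩) :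
    G z = ∏ p ∈ DSp n z, oplus p.1 p.2 := by
  classical
  have hn2 : 2 ≤ n := by omega
  have hinv : ∀ x, z (z x) = x := by
    intro x
    have h := Equiv.ext_iff.mp hz.1 x
    simpa [Equiv.Perm.mul_apply] using h
  obtain ⟨ν, hνdef⟩ : ∃ ν : ℕ → ℕ, ν = fun b => if h : b < k then μ ⟨b, h⟩ else 0 := ⟨_, rfl⟩
  have hνv : ∀ b, ∀ h : b < k, ν b = μ ⟨b, h⟩ := fun b h => by rw [hνdef]; exact dif_pos h
  have hν0 : ∀ b, ¬ b < k → ν b = 0 := fun b h => by rw [hνdef]; exact dif_neg h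
  have hcrit : Crit n z ν := by
    intro I B
    have h1 := hdom (I, B)
    rw [mem_DSp z hinv I B] at h1
    rw [h1]
    constructor
    · rintro ⟨hk, ha, hb⟩
      exact ⟨ha, by rw [hνv _ hk]; exact hb⟩
    · rintro ⟨ha, hb⟩
      by_cases hk : (B : ℕ) < k
      · exact ⟨hk, ha, by rw [← hνv _ hk]; exact hb⟩
      · exfalso
        rw [hν0 _ hk] at hb
        omega
  have hsh : ShapeOK ν := by
    intro b hb
    by_cases h1 : b + 1 < k
    · rw [hνv _ h1, hνv _ (by omega : b < k)]
      exact hanti (by rw [Fin.lt_def]; simp)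
    · rw [hν0 _ h1] at hb
      exact absurd rfl hb
  have hDeq : DSp n z = shapeFinset n ν := by
    ext p
    obtain ⟨p1, p2⟩ := p
    rw [mem_DSp z hinv p1 p2]
    simp only [shapeFinset, Finset.mem_filter, Finset.mem_univ, true_and]
    exact hcrit p1 p2
  rw [hDeq]
  exact main_lemma hn2 hev G hG (n * n + 1) z ν hz hcrit hsh (by omega)

end
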